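/- Under the hypotheses of the continuous-time Lyapunov theorem (E non-increasing with A_t = a_t b_t, 0 ≤ Ȧ_t ≤ a_t), for every t > 0 one has f(X(t)) − f(x*) ≤ (A₀/A_t)(f(x₀) − f(x*)) + ‖x₀ − x*‖²/(2 A_t). -/

import Mathlib

open Set Filter Topology

open scoped RealInnerProductSpace

/-- First-order condition for convex differentiable functions. -/
lemma convex_grad_ineq {H : Type*} [NormedAddCommGroup H] [InnerProductSpace ℝ H]
    [CompleteSpace H]
    {f : H → ℝ} (hconv : ConvexOn ℝ Set.univ f) {x gx : H}
    (hg : HasGradientAt f gx x) (y : H) :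
    f x + ⟪gx, y - x⟫ ≤ f y := by
  set φ : ℝ → ℝ := fun s => f (x + s • (y - x)) with hφdef
  have hline : HasDerivAt (fun s : ℝ => x + s • (y - x)) (y - x) 0 := by
    simpa using ((hasDerivAt_id (0:ℝ)).smul_const (y - x)).const_add x
  have hφ : HasDerivAt φ ⟪gx, y - x⟫ 0 := by
    have hg' : HasFDerivAt f (InnerProductSpace.toDual ℝ H gx) (x + (0:ℝ) • (y - x)) := by
      simpa using hg.hasFDerivAt
    have := hg'.comp_hasDerivAt 0 hline
    simpa [φ, Function.comp_def, InnerProductSpace.toDual_apply_apply] using this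
  have hslope : ∀ s ∈ Set.Ioc (0:ℝ) 1, slope φ 0 s ≤ f y - f x := by
    intro s hs
    have h1 : φ s ≤ (1 - s) * f x + s * f y := by
      have := hconv.2 (Set.mem_univ x) (Set.mem_univ y)
        (by linarith [hs.1, hs.2] : (0:ℝ) ≤ 1 - s) (le_of_lt hs.1) (by ring)
      have hxy : (1 - s) • x + s • y = x + s • (y - x) := by
        simp [smul_sub, sub_smul]; abel
      simpa [hxy] using this
    have h0 : φ 0 = f x := by simp [φ]
    rw [slope_def_field, sub_zero, h0, div_le_iff₀ hs.1]
    nlinarith [hs.1]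
  have htend : Tendsto (slope φ 0) (𝓝[>] (0:ℝ)) (𝓝 ⟪gx, y - x⟫) :=
    (hasDerivAt_iff_tendsto_slope.mp hφ).mono_left
      (nhdsWithin_mono _ (fun z hz => ne_of_gt hz))
  have hle : ⟪gx, y - x⟫ ≤ f y - f x := by
    refine le_of_tendsto htend ?_
    filter_upwards [Ioc_mem_nhdsGT_of_mem (by norm_num : (0:ℝ) ∈ Set.Ico (0:ℝ) 1)]
      with s hs using hslope s hs
  linarith

/-- Continuous-time convergence rate
`f(X t) - f x* ≤ (A₀/A_t)(f x₀ - f x*) + ‖x₀ - x*‖²/(2 A_t)` for `t > 0`. -/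
theorem sppa_stmt1
    {H : Type*} [NormedAddCommGroup H] [InnerProductSpace ℝ H] [CompleteSpace H]
    (f : H → ℝ) (g : H → H)
    (hconv : ConvexOn ℝ Set.univ f)
    (hgrad : ∀ x, HasGradientAt f (g x) x)
    (xs : H) (hmin : ∀ y, f xs ≤ f y)
    (a b c : ℝ → ℝ)
    (hapos : ∀ t > (0:ℝ), 0 < a t) (hbpos : ∀ t > (0:ℝ), 0 < b t)
    (hcpos : ∀ t > (0:ℝ), 0 < c t)
    (ha0 : 0 ≤ a 0) (hb0 : 0 ≤ b 0) (hc0 : 0 ≤ c 0)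
    (x0 : H) (X Z X' : ℝ → H)
    (hX0 : X 0 = x0) (hZ0 : Z 0 = x0)
    (hX : ∀ t ∈ Set.Ici (0:ℝ), HasDerivAt X (X' t) t)
    (hZeq : ∀ t ∈ Set.Ici (0:ℝ), Z t = b t • X' t + c t • g (X t) + X t)
    (hZ' : ∀ t ∈ Set.Ici (0:ℝ), HasDerivAt Z (-(a t) • g (X t)) t)
    (A' : ℝ → ℝ)
    (hA : ∀ t ∈ Set.Ici (0:ℝ), HasDerivAt (fun s => a s * b s) (A' t) t)
    (hA'nonneg : ∀ t ∈ Set.Ici (0:ℝ), 0 ≤ A' t)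
    (hA'le : ∀ t ∈ Set.Ici (0:ℝ), A' t ≤ a t) :
    ∀ t > (0:ℝ),
      f (X t) - f xs ≤
        (a 0 * b 0) / (a t * b t) * (f x0 - f xs)
          + ‖x0 - xs‖^2 / (2 * (a t * b t)) := by
  have hanneg : ∀ t ∈ Set.Ici (0:ℝ), 0 ≤ a t := by
    intro t ht
    rcases eq_or_lt_of_le (Set.mem_Ici.mp ht) with h | h
    · simpa [← h] using ha0
    · exact (hapos t h).le
  have hcnneg : ∀ t ∈ Set.Ici (0:ℝ), 0 ≤ c t := by
    intro t ht
    rcases eq_or_lt_of_le (Set.mem_Ici.mp ht) with h | h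
    · simpa [← h] using hc0
    · exact (hcpos t h).le
  set E : ℝ → ℝ := fun t => a t * b t * (f (X t) - f xs) + ⟪Z t - xs, Z t - xs⟫ / 2 with hE
  set E' : ℝ → ℝ := fun t => A' t * (f (X t) - f xs) + a t * b t * ⟪g (X t), X' t⟫
      + ⟪-(a t) • g (X t), Z t - xs⟫ with hE'
  have hEderiv : ∀ t ∈ Set.Ici (0:ℝ), HasDerivAt E (E' t) t := by
    intro t ht
    have hfX : HasDerivAt (fun s => f (X s)) ⟪g (X t), X' t⟫ t := by
      have := (hgrad (X t)).hasFDerivAt.comp_hasDerivAt t (hX t ht)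
      simpa [Function.comp_def, InnerProductSpace.toDual_apply_apply] using this
    have h1 : HasDerivAt (fun s => a s * b s * (f (X s) - f xs))
        (A' t * (f (X t) - f xs) + a t * b t * ⟪g (X t), X' t⟫) t := by
      have := (hA t ht).mul (hfX.sub_const (f xs))
      exact this
    have hZs : HasDerivAt (fun s => Z s - xs) (-(a t) • g (X t)) t :=
      (hZ' t ht).sub_const xs
    have h2 : HasDerivAt (fun s => ⟪Z s - xs, Z s - xs⟫ / 2)
        (⟪-(a t) • g (X t), Z t - xs⟫) t := by
      have := (hZs.inner ℝ hZs).div_const 2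
      have hsym : ⟪Z t - xs, -(a t) • g (X t)⟫ = ⟪-(a t) • g (X t), Z t - xs⟫ :=
        real_inner_comm _ _
      refine HasDerivAt.congr_deriv this ?_
      rw [hsym]; ring
    exact h1.add h2
  have hE'nonpos : ∀ t ∈ Set.Ici (0:ℝ), E' t ≤ 0 := by
    intro t ht
    have hgineq : f (X t) + ⟪g (X t), xs - X t⟫ ≤ f xs :=
      convex_grad_ineq hconv (hgrad (X t)) xs
    have hfpos : 0 ≤ f (X t) - f xs := sub_nonneg.mpr (hmin (X t))
    have hinner : ⟪-(a t) • g (X t), Z t - xs⟫ =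
        -(a t) * (b t * ⟪g (X t), X' t⟫ + c t * ⟪g (X t), g (X t)⟫
          + ⟪g (X t), X t - xs⟫) := by
      rw [hZeq t ht]
      have : b t • X' t + c t • g (X t) + X t - xs
          = b t • X' t + (c t • g (X t) + (X t - xs)) := by abel
      rw [this, inner_smul_left, inner_add_right, inner_add_right,
        inner_smul_right, inner_smul_right]
      simp only [starRingEnd_apply, star_trivial]
      ring
    have hgg : 0 ≤ ⟪g (X t), g (X t)⟫ := real_inner_self_nonneg
    have hkey : f (X t) - f xs ≤ ⟪g (X t), X t - xs⟫ := by
      have : ⟪g (X t), xs - X t⟫ = -⟪g (X t), X t - xs⟫ := by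
        rw [← inner_neg_right]; congr 1; abel
      linarith [hgineq, this ▸ hgineq]
    have ha' := hA'le t ht
    have han := hanneg t ht
    have hcn := hcnneg t ht
    simp only [E', hinner]
    nlinarith [mul_nonneg (mul_nonneg han hcn) hgg,
      mul_le_mul_of_nonneg_left hkey han,
      mul_le_mul_of_nonneg_right ha' hfpos]
  have hanti : AntitoneOn E (Set.Ici (0:ℝ)) := by
    apply antitoneOn_of_deriv_nonpos (convex_Ici 0)
    · exact fun t ht => ((hEderiv t ht).continuousAt).continuousWithinAt
    · intro t ht
      rw [interior_Ici] at ht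
      exact (hEderiv t (Set.mem_Ici.mpr (Set.mem_Ioi.mp ht).le)).differentiableAt.differentiableWithinAt
    · intro t ht
      rw [interior_Ici] at ht
      rw [(hEderiv t (Set.mem_Ici.mpr (Set.mem_Ioi.mp ht).le)).deriv]
      exact hE'nonpos t (Set.mem_Ici.mpr (Set.mem_Ioi.mp ht).le)
  intro t ht
  have hAt : 0 < a t * b t := mul_pos (hapos t ht) (hbpos t ht)
  have hEle : E t ≤ E 0 := hanti (Set.self_mem_Ici) (Set.mem_Ici.mpr ht.le) ht.le
  have hE0 : E 0 = a 0 * b 0 * (f x0 - f xs) + ‖x0 - xs‖^2 / 2 := by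
    simp [E, hX0, hZ0, real_inner_self_eq_norm_sq]
  have hZnn : 0 ≤ (⟪Z t - xs, Z t - xs⟫ : ℝ) / 2 := by
    have := real_inner_self_nonneg (x := Z t - xs); linarith
  have key : a t * b t * (f (X t) - f xs)
      ≤ a 0 * b 0 * (f x0 - f xs) + ‖x0 - xs‖^2 / 2 := by
    have h1 : a t * b t * (f (X t) - f xs) ≤ E t := by simp only [E]; linarith [hZnn]
    rw [hE0] at hEle
    exact h1.trans hEle
  calc f (X t) - f xs = a t * b t * (f (X t) - f xs) / (a t * b t) := by
        rw [mul_div_cancel_left₀ _ hAt.ne']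
    _ ≤ (a 0 * b 0 * (f x0 - f xs) + ‖x0 - xs‖^2 / 2) / (a t * b t) :=
        (div_le_div_iff_of_pos_right hAt).mpr key
    _ = (a 0 * b 0) / (a t * b t) * (f x0 - f xs) + ‖x0 - xs‖^2 / (2 * (a t * b t)) := by
        field_simp
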